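/- If |αγ₀| ≤ α²/β², then the unique nearest point of C̃_α to (0,0,γ₀) is (0,0,0). -/

import Mathlib

variable {X : Type*} [NormedAddCommGroup X] [InnerProductSpace ℝ X]

/-- Squared β-weighted distance on `X × X × ℝ`. -/
noncomputable def d2 (β : ℝ) (p q : X × X × ℝ) : ℝ :=
  ‖p.1 - q.1‖^2 + ‖p.2.1 - q.2.1‖^2 + β^2 * (p.2.2 - q.2.2)^2

/-- The set of nearest points of `S` to `z` in the β-weighted norm. -/
noncomputable def projSet (β : ℝ) (S : Set (X × X × ℝ)) (z : X × X × ℝ) :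
    Set (X × X × ℝ) :=
  {p | p ∈ S ∧ ∀ q ∈ S, d2 β p z ≤ d2 β q z}

/-- The set `C̃_α`. -/
def Ctilde (α : ℝ) : Set (X × X × ℝ) := {p | ‖p.1‖^2 - ‖p.2.1‖^2 = 2 * α * p.2.2}

/-- The set `C_α`. -/
def Cα (α : ℝ) : Set (X × X × ℝ) := {p | (inner ℝ p.1 p.2.1 : ℝ) = α * p.2.2}

theorem stmt15 (α β γ₀ : ℝ) (hα : α ≠ 0) (hβ : 0 < β)
    (hcase : |α * γ₀| ≤ α^2 / β^2) :
    projSet β (Ctilde α) ((0 : X), (0 : X), γ₀) =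
      {((0 : X), (0 : X), (0 : ℝ))} := by
  have hα' : 0 < |α| := abs_pos.mpr hα
  have h2 : β^2 * |γ₀| ≤ |α| := by
    rw [le_div_iff₀ (by positivity)] at hcase
    rw [abs_mul] at hcase
    nlinarith [sq_abs α]
  have key : ∀ p : X × X × ℝ, p ∈ Ctilde α →
      β^2*γ₀^2 + β^2*p.2.2^2 ≤ d2 β p ((0 : X), (0 : X), γ₀) := by
    rintro ⟨u, v, γ⟩ hp
    simp only [Ctilde, Set.mem_setOf_eq] at hp
    simp only [d2, sub_zero]
    have h1 : |2*α*γ| ≤ ‖u‖^2 + ‖v‖^2 := by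
      have : |2*α*γ| = |‖u‖^2 - ‖v‖^2| := by rw [hp]
      rw [this]
      rcases abs_cases (‖u‖^2 - ‖v‖^2) with ⟨h, _⟩ | ⟨h, _⟩ <;>
        nlinarith [sq_nonneg ‖u‖, sq_nonneg ‖v‖]
    have ha : γ * γ₀ ≤ |γ| * |γ₀| := by rw [← abs_mul]; exact le_abs_self _
    have hb : |γ| * (β^2 * |γ₀|) ≤ |γ| * |α| := by
      exact mul_le_mul_of_nonneg_left h2 (abs_nonneg γ)
    have hc : |2*α*γ| = 2 * (|α| * |γ|) := by
      rw [abs_mul, abs_mul, abs_two]; ring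
    nlinarith [mul_le_mul_of_nonneg_left ha (by positivity : (0:ℝ) ≤ 2*β^2)]
  have h0 : ((0 : X), (0 : X), (0 : ℝ)) ∈ Ctilde α := by simp [Ctilde]
  have hd0 : d2 β ((0 : X), (0 : X), (0 : ℝ)) ((0 : X), (0 : X), γ₀) = β^2 * γ₀^2 := by
    simp [d2]
  ext ⟨u, v, γ⟩
  simp only [projSet, Set.mem_setOf_eq, Set.mem_singleton_iff, Prod.mk.injEq]
  constructor
  · rintro ⟨hmem, hmin⟩
    have hle := hmin _ h0
    rw [hd0] at hle
    have hk := key (u, v, γ) hmem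
    have h3 : (β*γ)^2 = 0 := le_antisymm (by nlinarith) (sq_nonneg _)
    have hγ : γ = 0 := (mul_eq_zero.mp (sq_eq_zero_iff.mp h3)).resolve_left hβ.ne'
    subst hγ
    have hd : d2 β (u, v, (0:ℝ)) ((0 : X), (0 : X), γ₀)
        = ‖u‖^2 + ‖v‖^2 + β^2 * γ₀^2 := by simp [d2]
    rw [hd] at hle
    have hu : ‖u‖ = 0 := by nlinarith [sq_nonneg ‖u‖, sq_nonneg ‖v‖]
    have hv : ‖v‖ = 0 := by nlinarith [sq_nonneg ‖u‖, sq_nonneg ‖v‖]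
    exact ⟨norm_eq_zero.mp hu, norm_eq_zero.mp hv, rfl⟩
  · rintro ⟨hu, hv, hγ⟩
    subst hu; subst hv; subst hγ
    refine ⟨h0, fun q hq => ?_⟩
    have := key q hq
    rw [hd0]
    nlinarith [sq_nonneg q.2.2]
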